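/- Let N ∈ ℕ, C_1, …, C_N ∈ ℝ, θ > 0, and ε, A ∈ ℝ \ {0}. Let u : ℝ → ℝ be twice differentiable with u(s) > 0 for all s, and let E, P, F_1, …, F_N : ℝ → ℝ satisfy u''(s) + [E(s) − P(s)]u(s) = Σ_{i=1}^N F_i(s)/u(s)^{C_i} for all s ∈ ℝ. Let σ : ℝ → ℝ satisfy σ'(t) = (1/θ) u(σ(t)) for all t, and let ψ be differentiable with ψ'(s)² = (2/(εA)) P(s) for all s. Define a(t) = u(σ(t))^{−2/A}, φ(t) = ψ(σ(t)), G(t) = (2/(Aθ²)) E(σ(t)), G_i(t) = −(2/(Aθ²)) F_i(σ(t)), and A_i = (A/2)(1 − C_i). Then a is positive and twice differentiable, and H'(t) + εφ'(t)² = G(t)/a(t)^A + Σ_{i=1}^N G_i(t)/a(t)^{A_i} holds for all t ∈ ℝ, where H = a'/a. -/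

import Mathlib

/-- corollary (A ≠ 0, δ = 0), converse direction. -/
theorem stmt_7
    (N : ℕ) (C : Fin N → ℝ) (θ ε A : ℝ)
    (hθ : 0 < θ) (hε : ε ≠ 0) (hA : A ≠ 0)
    (u E P : ℝ → ℝ) (F : Fin N → ℝ → ℝ)
    (hud : Differentiable ℝ u) (hud' : Differentiable ℝ (deriv u))
    (hupos : ∀ s, 0 < u s)
    (hNLS : ∀ s, deriv (deriv u) s + (E s - P s) * u s = ∑ i, F i s / u s ^ C i)
    (σ ψ : ℝ → ℝ)
    (hσ : ∀ t, deriv σ t = (1 / θ) * u (σ t))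
    (hψd : Differentiable ℝ ψ)
    (hψ : ∀ s, (deriv ψ s) ^ 2 = (2 / (ε * A)) * P s)
    (a φ G : ℝ → ℝ) (Gi : Fin N → ℝ → ℝ) (Ai : Fin N → ℝ)
    (ha : ∀ t, a t = u (σ t) ^ (-2 / A))
    (hφ : ∀ t, φ t = ψ (σ t))
    (hG : ∀ t, G t = (2 / (A * θ ^ 2)) * E (σ t))
    (hGi : ∀ i t, Gi i t = -(2 / (A * θ ^ 2)) * F i (σ t))
    (hAi : ∀ i, Ai i = (A / 2) * (1 - C i)) :
    (∀ t, 0 < a t) ∧ Differentiable ℝ a ∧ Differentiable ℝ (deriv a) ∧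
      ∀ t, deriv (fun t => deriv a t / a t) t + ε * (deriv φ t) ^ 2
        = G t / a t ^ A + ∑ i, Gi i t / a t ^ Ai i := by
  -- σ is differentiable (its deriv is nonzero, so junk value 0 is impossible)
  have hσd : ∀ t, DifferentiableAt ℝ σ t := by
    intro t
    by_contra h
    have h1 := hσ t
    rw [deriv_zero_of_not_differentiableAt h] at h1
    have h2 : 0 < (1 / θ) * u (σ t) := mul_pos (by positivity) (hupos _)
    linarith
  have hσDA : ∀ t, HasDerivAt σ ((1 / θ) * u (σ t)) t := fun t =>
    hσ t ▸ (hσd t).hasDerivAt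
  have hvpos : ∀ t, 0 < u (σ t) := fun t => hupos _
  have hva : ∀ t, HasDerivAt (fun t => u (σ t))
      (deriv u (σ t) * ((1 / θ) * u (σ t))) t := fun t =>
    (hud (σ t)).hasDerivAt.comp t (hσDA t)
  -- derivative of a
  have haD : ∀ t, HasDerivAt a
      ((-2 / A) * u (σ t) ^ ((-2 / A) - 1) *
        (deriv u (σ t) * ((1 / θ) * u (σ t)))) t := by
    intro t
    have h2 := Real.hasDerivAt_rpow_const (x := u (σ t)) (p := -2 / A)
      (Or.inl (hvpos t).ne')
    exact (h2.comp t (hva t) :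
        HasDerivAt ((fun x : ℝ => x ^ (-2 / A)) ∘ fun t => u (σ t)) _ t).congr_of_eventuallyEq
      (Filter.Eventually.of_forall fun s => ha s)
  have hapos : ∀ t, 0 < a t := by
    intro t
    rw [ha t]
    exact Real.rpow_pos_of_pos (hvpos t) _
  have hadiff : Differentiable ℝ a := fun t => (haD t).differentiableAt
  have hderiva : deriv a = fun t => (-2 / A) * u (σ t) ^ ((-2 / A) - 1) *
      (deriv u (σ t) * ((1 / θ) * u (σ t))) := funext fun t => (haD t).deriv
  have hadiff' : Differentiable ℝ (deriv a) := by
    rw [hderiva]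
    intro t
    have h1 : DifferentiableAt ℝ (fun t => u (σ t) ^ ((-2 / A) - 1)) t :=
      ((Real.hasDerivAt_rpow_const (x := u (σ t)) (p := (-2 / A) - 1)
        (Or.inl (hvpos t).ne')).comp t (hva t) :
        HasDerivAt ((fun x : ℝ => x ^ ((-2 / A) - 1)) ∘ fun t => u (σ t)) _ t).differentiableAt
    have h2 : DifferentiableAt ℝ (fun t => deriv u (σ t)) t :=
      ((hud' (σ t)).hasDerivAt.comp t (hσDA t)).differentiableAt
    exact (h1.const_mul _).mul (h2.mul ((hva t).differentiableAt.const_mul _))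
  refine ⟨hapos, hadiff, hadiff', ?_⟩
  -- H = a'/a simplifies
  have hHfun : (fun t => deriv a t / a t) =
      fun t => (-2 / (A * θ)) * deriv u (σ t) := by
    funext t
    have hw := hvpos t
    have h1 : u (σ t) ≠ 0 := hw.ne'
    have h2 : u (σ t) ^ (-2 / A) ≠ 0 := (Real.rpow_pos_of_pos hw _).ne'
    rw [(haD t).deriv, ha t, Real.rpow_sub_one h1]
    field_simp
  intro t
  have hderivH : deriv (fun t => deriv a t / a t) t =
      (-2 / (A * θ)) * (deriv (deriv u) (σ t) * ((1 / θ) * u (σ t))) := by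
    rw [hHfun]
    exact (((hud' (σ t)).hasDerivAt.comp t (hσDA t)).const_mul _).deriv
  have hφfun : φ = fun t => ψ (σ t) := funext hφ
  have hderivφ : deriv φ t = deriv ψ (σ t) * ((1 / θ) * u (σ t)) := by
    rw [hφfun]
    exact ((hψd (σ t)).hasDerivAt.comp t (hσDA t)).deriv
  set w := u (σ t) with hwdef
  have hwpos : 0 < w := hvpos t
  have hm2 : w ^ ((-2 : ℝ)) = (w ^ 2)⁻¹ := by
    rw [Real.rpow_neg hwpos.le]
    norm_num [Real.rpow_two]
  have hEterm : G t / a t ^ A = 2 / (A * θ ^ 2) * E (σ t) * w ^ 2 := by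
    rw [hG, ha t, ← Real.rpow_mul hwpos.le]
    have hc : -2 / A * A = -2 := by field_simp
    rw [hc, hm2, div_eq_mul_inv, inv_inv]
  have hsum : ∑ i, Gi i t / a t ^ Ai i =
      -(2 / (A * θ ^ 2)) * w * ∑ i, F i (σ t) / w ^ C i := by
    rw [Finset.mul_sum]
    refine Finset.sum_congr rfl fun i _ => ?_
    rw [hGi, hAi, ha t, ← Real.rpow_mul hwpos.le]
    have hc : -2 / A * (A / 2 * (1 - C i)) = C i - 1 := by
      field_simp
      ring
    rw [hc, Real.rpow_sub hwpos, Real.rpow_one]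
    have h1 : w ≠ 0 := hwpos.ne'
    have h2 : w ^ C i ≠ 0 := (Real.rpow_pos_of_pos hwpos _).ne'
    field_simp
  rw [hderivH, hderivφ, hEterm, hsum, mul_pow, hψ (σ t)]
  have hq := hNLS (σ t)
  set S := ∑ i, F i (σ t) / w ^ C i with hS
  have hqq : deriv (deriv u) (σ t) = S - (E (σ t) - P (σ t)) * w := by linarith
  rw [hqq]
  field_simp
  ring
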